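/- Let H : ℝ × ℂ^{n+1} → ℝ be continuously differentiable in the second variable, S¹-invariant in x and positively 2-homogeneous in x. Let x : ℝ → ℂ^{n+1} be a differentiable 1-periodic curve with x(t) ≠ 0 for all t satisfying ẋ(t) = i·(∇ₓH(t, x(t)) − 2πλ·x(t)), and let u : ℝ → ℂ \ {0} be a differentiable 1-periodic function such that x'(t) := u(t)·x(t) satisfies ẋ'(t) = i·(∇ₓH(t, x'(t)) − 2πλ'·x'(t)) for all t, for some λ' ∈ ℝ. Then λ' − λ ∈ ℤ and u(t) = u(0)·e^{−2πi(λ' − λ)t} for all t. -/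

import Mathlib

noncomputable section

open Real

/-- `ℂ^{n+1}`, regarded as a real inner product space via the instance
`InnerProductSpace.complexToReal` (real part of the Hermitian product). -/
abbrev EucC (n : ℕ) := EuclideanSpace ℂ (Fin (n + 1))

/-- If a nowhere vanishing 1-periodic solution `x` of the `λ`-twisted Hamiltonian equation
is multiplied by a nowhere vanishing 1-periodic complex function `u` and again yields a
solution of the `λ'`-twisted equation, then `λ' − λ ∈ ℤ` and
`u(t) = u(0) e^{−2πi(λ'−λ)t}` : all solutions projecting to a given solution on `ℂℙⁿ`
belong to the `ℂ × ℤ`-family of one of them. -/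
theorem twisted_solutions_same_projection (n : ℕ)
    (H : ℝ → EucC n → ℝ) (G : ℝ → EucC n → EucC n)
    -- `H` is continuously differentiable in the second variable, with gradient `G`
    (hgrad : ∀ t x, HasGradientAt (fun y => H t y) (G t x) x)
    (hGcont : ∀ t, Continuous fun x => G t x)
    -- `H` is `S¹`-invariant in `x`
    (hinv : ∀ t (θ : ℝ) x, H t (Complex.exp ((θ : ℂ) * Complex.I) • x) = H t x)
    -- `H` is positively 2-homogeneous in `x`
    (hhom : ∀ t (r : ℝ), 0 ≤ r → ∀ x, H t (r • x) = r ^ 2 * H t x)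
    (lam lam' : ℝ) (x : ℝ → EucC n)
    (hx : ∀ t, DifferentiableAt ℝ x t)
    (hxper : ∀ t, x (t + 1) = x t)
    (hxne : ∀ t, x t ≠ 0)
    (hxeq : ∀ t, deriv x t = Complex.I • (G t (x t) - ((2 * π * lam : ℝ)) • x t))
    (u : ℝ → ℂ)
    (hu : ∀ t, DifferentiableAt ℝ u t)
    (huper : ∀ t, u (t + 1) = u t)
    (hune : ∀ t, u t ≠ 0)
    (x' : ℝ → EucC n) (hx' : ∀ t, x' t = u t • x t)
    (hx'eq : ∀ t, deriv x' t = Complex.I • (G t (x' t) - ((2 * π * lam' : ℝ)) • x' t)) :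
    (∃ k : ℤ, lam' - lam = (k : ℝ)) ∧
    (∀ t, u t = u 0 * Complex.exp (((-(2 * π * (lam' - lam) * t) : ℝ) : ℂ) * Complex.I)) := by
  -- Step 1 : `H` is `|c|²`-homogeneous for complex scalars
  have hH : ∀ t (c : ℂ) (y : EucC n), H t (c • y) = ‖c‖ ^ 2 * H t y := by
    intro t c y
    conv_lhs => rw [← Complex.norm_mul_exp_arg_mul_I c]
    rw [mul_smul, Complex.coe_smul, hhom t _ (norm_nonneg c), hinv]
  -- Step 2 : the gradient is complex 1-homogeneous
  have hG : ∀ t (c : ℂ), c ≠ 0 → ∀ (y : EucC n), G t (c • y) = c • G t y := by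
    intro t c hc y
    set r : ℝ := ‖c‖ ^ 2 with hr
    have hr0 : (0 : ℝ) < r := by
      have : ‖c‖ ≠ 0 := by simpa using hc
      positivity
    have hA : HasFDerivAt (fun z : EucC n => c • z)
        (c • ContinuousLinearMap.id ℝ (EucC n)) y := (hasFDerivAt_id y).const_smul c
    have h1 : HasFDerivAt (fun z : EucC n => H t (c • z))
        ((InnerProductSpace.toDual ℝ (EucC n) (G t (c • y))).comp
          (c • ContinuousLinearMap.id ℝ (EucC n))) y :=
      ((hgrad t (c • y)).hasFDerivAt).comp y hA
    have h2 : HasFDerivAt (fun z : EucC n => H t (c • z))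
        (r • (InnerProductSpace.toDual ℝ (EucC n) (G t y))) y := by
      have h := ((hgrad t y).hasFDerivAt).const_mul r
      have hfun : (fun z : EucC n => r * H t z) = fun z => H t (c • z) := by
        funext z; rw [hH t c z]
      rwa [hfun] at h
    have heq := h1.unique h2
    have hL : (InnerProductSpace.toDual ℝ (EucC n) (G t (c • y))).comp
          (c • ContinuousLinearMap.id ℝ (EucC n))
        = InnerProductSpace.toDual ℝ (EucC n) ((starRingEnd ℂ) c • G t (c • y)) := by
      ext v
      simp only [ContinuousLinearMap.comp_apply, ContinuousLinearMap.smul_apply,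
        ContinuousLinearMap.id_apply, InnerProductSpace.toDual_apply_apply]
      simp only [PiLp.inner_apply, PiLp.smul_apply, smul_eq_mul]
      refine Finset.sum_congr rfl fun i _ => ?_
      rw [Complex.inner, Complex.inner]
      simp only [map_mul, Complex.conj_conj]
      ring_nf
    have hR : r • (InnerProductSpace.toDual ℝ (EucC n) (G t y))
        = InnerProductSpace.toDual ℝ (EucC n) (r • G t y) := by
      ext v
      simp only [ContinuousLinearMap.smul_apply, InnerProductSpace.toDual_apply_apply,
        smul_eq_mul]
      rw [real_inner_smul_left]
    have hvec : (starRingEnd ℂ) c • G t (c • y) = r • G t y :=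
      (InnerProductSpace.toDual ℝ (EucC n)).injective (by rw [← hL, ← hR, heq])
    have hmul : c • ((starRingEnd ℂ) c • G t (c • y)) = c • ((r : ℂ) • G t y) := by
      rw [hvec, Complex.coe_smul]
    rw [smul_smul, smul_smul] at hmul
    have habs : c * (starRingEnd ℂ) c = (r : ℂ) := by
      rw [Complex.mul_conj, hr]
      norm_cast
      exact (Complex.sq_norm c).symm
    rw [habs] at hmul
    have : (r : ℂ) • G t (c • y) = (r : ℂ) • (c • G t y) := by
      rw [hmul, smul_smul, mul_comm]
    exact smul_right_injective (EucC n) (by exact_mod_cast hr0.ne') this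
  -- Step 3 : the ODE satisfied by `u`
  set c₀ : ℂ := ((2 * π * (lam - lam') : ℝ) : ℂ) * Complex.I with hc₀
  have hc0 : ∀ t, deriv u t = c₀ * u t := by
    intro t
    have hdx : HasDerivAt x (Complex.I • (G t (x t) - ((2 * π * lam : ℝ)) • x t)) t := by
      have h := (hx t).hasDerivAt; rwa [hxeq t] at h
    have hdu : HasDerivAt u (deriv u t) t := (hu t).hasDerivAt
    have hprod : HasDerivAt (fun s => u s • x s)
        (u t • (Complex.I • (G t (x t) - ((2 * π * lam : ℝ)) • x t)) + deriv u t • x t) t :=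
      hdu.smul hdx
    have hd : HasDerivAt x'
        (u t • (Complex.I • (G t (x t) - ((2 * π * lam : ℝ)) • x t)) + deriv u t • x t) t :=
      hprod.congr_of_eventuallyEq (Filter.Eventually.of_forall hx')
    have hE : u t • (Complex.I • (G t (x t) - ((2 * π * lam : ℝ)) • x t)) + deriv u t • x t
        = Complex.I • (u t • G t (x t) - ((2 * π * lam' : ℝ)) • (u t • x t)) := by
      have h := (hd.deriv).symm.trans (hx'eq t)
      rw [hx' t, hG t (u t) (hune t) (x t)] at h
      exact h
    have hE2 : (deriv u t - c₀ * u t) • x t = 0 := by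
      rw [hc₀]
      simp only [smul_sub, smul_smul, ← Complex.coe_smul] at hE ⊢
      linear_combination (norm := module) hE
    rcases smul_eq_zero.1 hE2 with h | h
    · exact sub_eq_zero.1 h
    · exact absurd h (hxne t)
  -- Step 4 : solve the ODE
  have hExp : ∀ s : ℝ, HasDerivAt (fun s : ℝ => Complex.exp (-(c₀ * s)))
      (Complex.exp (-(c₀ * s)) * (-c₀)) s := by
    intro s
    have h1 : HasDerivAt (fun z : ℂ => Complex.exp (-(c₀ * z)))
        (Complex.exp (-(c₀ * (s : ℂ))) * (-c₀)) (s : ℂ) := by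
      have := (((hasDerivAt_id (s : ℂ)).const_mul c₀).neg).cexp
      simpa using this
    exact h1.comp_ofReal
  have hv : ∀ s, HasDerivAt (fun s : ℝ => u s * Complex.exp (-(c₀ * s))) 0 s := by
    intro s
    have h := (hu s).hasDerivAt.mul (hExp s)
    have hz : deriv u s * Complex.exp (-(c₀ * s))
        + u s * (Complex.exp (-(c₀ * s)) * (-c₀)) = 0 := by
      rw [hc0 s]; ring
    rwa [hz] at h
  have hconst : ∀ s, u s * Complex.exp (-(c₀ * s)) = u 0 * Complex.exp (-(c₀ * 0)) :=
    fun s => is_const_of_deriv_eq_zero (fun s => (hv s).differentiableAt)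
      (fun s => (hv s).deriv) s 0
  have hsol : ∀ s : ℝ, u s = u 0 * Complex.exp (c₀ * s) := by
    intro s
    have h := hconst s
    simp only [Complex.ofReal_zero, mul_zero, neg_zero, Complex.exp_zero, mul_one] at h
    have hne : Complex.exp (-(c₀ * s)) ≠ 0 := Complex.exp_ne_zero _
    field_simp [Complex.exp_neg] at h
    rw [← h, mul_assoc, ← Complex.exp_add, neg_add_cancel, Complex.exp_zero, mul_one]
  constructor
  · -- periodicity forces `λ' − λ ∈ ℤ`
    have h1 : u 1 = u 0 := by simpa using huper 0
    rw [hsol 1] at h1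
    have hone : Complex.exp (c₀ * (1 : ℝ)) = 1 :=
      mul_left_cancel₀ (hune 0) (h1.trans (mul_one (u 0)).symm)
    rw [Complex.exp_eq_one_iff] at hone
    obtain ⟨k, hk⟩ := hone
    refine ⟨-k, ?_⟩
    have hcast : ((2 * π * (lam - lam') : ℝ) : ℂ) = ((2 * π * (k : ℝ) : ℝ) : ℂ) := by
      apply mul_right_cancel₀ Complex.I_ne_zero
      rw [hc₀] at hk
      push_cast at hk ⊢
      linear_combination hk
    have h2 : (2 * π * (lam - lam') : ℝ) = 2 * π * (k : ℝ) := by exact_mod_cast hcast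
    have hπ : (2 * π : ℝ) ≠ 0 := by positivity
    have h3 : lam - lam' = (k : ℝ) :=
      mul_left_cancel₀ hπ (by linarith)
    push_cast
    linarith
  · intro t
    rw [hsol t]
    congr 1
    rw [hc₀]
    push_cast
    ring
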